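/- For every integer n ≥ 3, every optimal matching preclusion set of the n-dimensional bubble-sort star graph BS_n is trivial: if F ⊆ E(BS_n) has |F| = mp(BS_n) = 2n − 3 and BS_n − F has no perfect matching, then there is a vertex u of BS_n such that every edge of F is incident with u (so F is the set of all 2n − 3 edges incident with u). -/

import Mathlib

set_option maxRecDepth 10000

/-- The generating relation of the bubble-sort star graph: `u = v ∘ ⟨1,i⟩` for some
`i ∈ [2,n]` (0-based: swap of positions `0` and `i` with `i ≠ 0`), or `u = v ∘ ⟨i-1,i⟩`
for some `i ∈ [3,n]` (0-based: swap of consecutive positions `i, j = i+1` with `i ≥ 1`). -/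
def bssRel (n : ℕ) (u v : Equiv.Perm (Fin n)) : Prop :=
  (∃ i : Fin n, (i : ℕ) ≠ 0 ∧ u = v * Equiv.swap ⟨0, i.pos⟩ i) ∨
  (∃ i j : Fin n, (i : ℕ) + 1 = (j : ℕ) ∧ 1 ≤ (i : ℕ) ∧ u = v * Equiv.swap i j)

/-- The `n`-dimensional bubble-sort star graph `BS_n`, on the permutations of `{1,…,n}`. -/
def BS (n : ℕ) : SimpleGraph (Equiv.Perm (Fin n)) := SimpleGraph.fromRel (bssRel n)

/-- A set of edges `M` is a perfect matching of `G`: `M` consists of edges of `G` and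
every vertex lies in exactly one edge of `M`. -/
def IsPM {V : Type*} (G : SimpleGraph V) (M : Set (Sym2 V)) : Prop :=
  M ⊆ G.edgeSet ∧ ∀ v : V, ∃! e : Sym2 V, e ∈ M ∧ v ∈ e

/-- A set of edges `M` is an almost-perfect matching of `G`: there is exactly one
vertex lying in no edge of `M`, and every other vertex lies in exactly one edge of `M`. -/
def IsAPM {V : Type*} (G : SimpleGraph V) (M : Set (Sym2 V)) : Prop :=
  M ⊆ G.edgeSet ∧ ∃ w : V, (∀ e ∈ M, w ∉ e) ∧ ∀ v : V, v ≠ w → ∃! e : Sym2 V, e ∈ M ∧ v ∈ e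

/-- `G` has neither a perfect matching nor an almost-perfect matching. -/
def HasNoMatchings {V : Type*} (G : SimpleGraph V) : Prop :=
  (¬ ∃ M, IsPM G M) ∧ (¬ ∃ M, IsAPM G M)

/-- `(S, F)` is a strong matching preclusion set of `G`: deleting the vertices of `S`
(with all incident edges) and the edges of `F` leaves a graph with neither a perfect
matching nor an almost-perfect matching. -/
def IsSMPSet {V : Type*} (G : SimpleGraph V) (S : Set V) (F : Set (Sym2 V)) : Prop :=
  F ⊆ G.edgeSet ∧ HasNoMatchings ((G.deleteEdges F).induce (Sᶜ : Set V))

/-- `F` is a matching preclusion set of `G`: `G - F` has neither a perfect matching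
nor an almost-perfect matching. -/
def IsMPSet {V : Type*} (G : SimpleGraph V) (F : Set (Sym2 V)) : Prop :=
  F ⊆ G.edgeSet ∧ HasNoMatchings (G.deleteEdges F)

/-- `BS_n^i`: the set of permutations whose last entry equals `i`. -/
def BSslice {n : ℕ} (i : Fin n) : Set (Equiv.Perm (Fin n)) :=
  {a | a ⟨n - 1, Nat.sub_lt i.pos Nat.one_pos⟩ = i}

/-- `(V₁, V₂)` is a bipartition of `G`: the two classes partition the vertices and every
edge has one end in each class. -/
def Bipartition {V : Type*} (G : SimpleGraph V) (V1 V2 : Set V) : Prop :=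
  Disjoint V1 V2 ∧ V1 ∪ V2 = Set.univ ∧
    ∀ ⦃u v⦄, G.Adj u v → (u ∈ V1 ∧ v ∈ V2) ∨ (u ∈ V2 ∧ v ∈ V1)


namespace BSaux

/-- `t` is a generator of `BS n`. -/
def IsGen (n : ℕ) (t : Equiv.Perm (Fin n)) : Prop :=
  (∃ i : Fin n, (i : ℕ) ≠ 0 ∧ t = Equiv.swap ⟨0, i.pos⟩ i) ∨
  (∃ i j : Fin n, (i : ℕ) + 1 = (j : ℕ) ∧ 1 ≤ (i : ℕ) ∧ t = Equiv.swap i j)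

theorem isGen_swap {n : ℕ} {t : Equiv.Perm (Fin n)} (h : IsGen n t) :
    ∃ a b : Fin n, a ≠ b ∧ t = Equiv.swap a b := by
  rcases h with ⟨i, hi, rfl⟩ | ⟨i, j, hij, hi, rfl⟩
  · exact ⟨_, _, fun h => hi (by simpa using congrArg Fin.val h.symm), rfl⟩
  · refine ⟨i, j, fun h => ?_, rfl⟩
    have := congrArg Fin.val h
    omega

theorem gen_mul_self {n : ℕ} {t : Equiv.Perm (Fin n)} (h : IsGen n t) : t * t = 1 := by
  obtain ⟨a, b, -, rfl⟩ := isGen_swap h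
  exact Equiv.swap_mul_self a b

theorem gen_ne_one {n : ℕ} {t : Equiv.Perm (Fin n)} (h : IsGen n t) : t ≠ 1 := by
  obtain ⟨a, b, hab, rfl⟩ := isGen_swap h
  simpa [Equiv.swap_eq_one_iff] using hab

theorem adj_mul_gen {n : ℕ} {t : Equiv.Perm (Fin n)} (h : IsGen n t) (v : Equiv.Perm (Fin n)) :
    (BS n).Adj v (v * t) := by
  rw [BS, SimpleGraph.fromRel_adj]
  refine ⟨fun hc => gen_ne_one h ?_, Or.inr ?_⟩
  · have := congrArg (v⁻¹ * ·) hc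
    simpa [mul_assoc] using this.symm
  · rcases h with ⟨i, hi, rfl⟩ | ⟨i, j, hij, hi, rfl⟩
    · exact Or.inl ⟨i, hi, rfl⟩
    · exact Or.inr ⟨i, j, hij, hi, rfl⟩

theorem mem_edgeSet_iff {n : ℕ} (e : Sym2 (Equiv.Perm (Fin n))) :
    e ∈ (BS n).edgeSet ↔ ∃ v t, IsGen n t ∧ e = s(v, v * t) := by
  constructor
  · induction e with
  | _ u v =>
    intro he
    rw [SimpleGraph.mem_edgeSet, BS, SimpleGraph.fromRel_adj] at he
    obtain ⟨hne, h | h⟩ := he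
    · rcases h with ⟨i, hi, hu⟩ | ⟨i, j, hij, hi, hu⟩
      · exact ⟨v, _, Or.inl ⟨i, hi, rfl⟩, by rw [hu]; exact Sym2.eq_swap⟩
      · exact ⟨v, _, Or.inr ⟨i, j, hij, hi, rfl⟩, by rw [hu]; exact Sym2.eq_swap⟩
    · rcases h with ⟨i, hi, hu⟩ | ⟨i, j, hij, hi, hu⟩
      · exact ⟨u, _, Or.inl ⟨i, hi, rfl⟩, by rw [hu]⟩
      · exact ⟨u, _, Or.inr ⟨i, j, hij, hi, rfl⟩, by rw [hu]⟩
  · rintro ⟨v, t, ht, rfl⟩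
    exact adj_mul_gen ht v

/-- color uniqueness -/
theorem color_unique {n : ℕ} {g h : Equiv.Perm (Fin n)} (hg : IsGen n g) (hh : IsGen n h)
    {v w : Equiv.Perm (Fin n)} (he : s(v, v * g) = s(w, w * h)) :
    g = h ∧ (w = v ∨ w = v * g) := by
  rw [Sym2.eq_iff] at he
  rcases he with ⟨h1, h2⟩ | ⟨h1, h2⟩
  · subst h1
    exact ⟨mul_left_cancel h2, Or.inl rfl⟩
  · -- v = w * h, v * g = w
    have hgh : g = h := by
      have : v * g * h = v := by rw [h2, ← h1]
      have : g * h = 1 := by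
        have := congrArg (v⁻¹ * ·) this
        simpa [mul_assoc] using this
      have hinv : h = g⁻¹ := eq_inv_of_mul_eq_one_right this
      rw [hinv]
      obtain ⟨a, b, -, rfl⟩ := isGen_swap hg
      simp
    subst hgh
    exact ⟨rfl, Or.inr h2.symm⟩

end BSaux

namespace BSaux

/-- The two-color coset-switching perfect matching. -/
def pairM {n : ℕ} (g h : Equiv.Perm (Fin n)) (C : Set (Equiv.Perm (Fin n))) :
    Set (Sym2 (Equiv.Perm (Fin n))) :=
  {e | ∃ v, (v ∈ C ∧ e = s(v, v * h)) ∨ (v ∉ C ∧ e = s(v, v * g))}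

theorem isPM_pairM {n : ℕ} {g h : Equiv.Perm (Fin n)} (hg : IsGen n g) (hh : IsGen n h)
    {C : Set (Equiv.Perm (Fin n))} (hCg : ∀ x, x ∈ C → x * g ∈ C)
    (hCh : ∀ x, x ∈ C → x * h ∈ C)
    (hCg' : ∀ x, x * g ∈ C → x ∈ C) (hCh' : ∀ x, x * h ∈ C → x ∈ C) :
    IsPM (BS n) (pairM g h C) := by
  constructor
  · rintro e ⟨v, ⟨hv, rfl⟩ | ⟨hv, rfl⟩⟩
    · exact adj_mul_gen hh v
    · exact adj_mul_gen hg v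
  · intro v
    by_cases hv : v ∈ C
    · refine ⟨s(v, v * h), ⟨⟨v, Or.inl ⟨hv, rfl⟩⟩, Sym2.mem_mk_left _ _⟩, ?_⟩
      rintro e ⟨⟨w, ⟨hw, rfl⟩ | ⟨hw, rfl⟩⟩, hve⟩
      · rcases Sym2.mem_iff.1 hve with rfl | hvw
        · rfl
        · rw [Sym2.eq_iff]
          right
          exact ⟨by rw [hvw, mul_assoc, gen_mul_self hh, mul_one], hvw.symm⟩
      · rcases Sym2.mem_iff.1 hve with rfl | hvw
        · exact absurd hv hw
        · exact absurd (hCg' w (hvw ▸ hv)) hw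
    · refine ⟨s(v, v * g), ⟨⟨v, Or.inr ⟨hv, rfl⟩⟩, Sym2.mem_mk_left _ _⟩, ?_⟩
      rintro e ⟨⟨w, ⟨hw, rfl⟩ | ⟨hw, rfl⟩⟩, hve⟩
      · rcases Sym2.mem_iff.1 hve with rfl | hvw
        · exact absurd hw hv
        · exact absurd (show v ∈ C by rw [hvw]; exact hCh w hw) hv
      · rcases Sym2.mem_iff.1 hve with rfl | hvw
        · rfl
        · rw [Sym2.eq_iff]
          right
          exact ⟨by rw [hvw, mul_assoc, gen_mul_self hg, mul_one], hvw.symm⟩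

theorem isPM_deleteEdges {n : ℕ} {M F : Set (Sym2 (Equiv.Perm (Fin n)))}
    (hM : IsPM (BS n) M) (hMF : ∀ e ∈ M, e ∉ F) :
    IsPM ((BS n).deleteEdges F) M := by
  refine ⟨fun e he => ?_, hM.2⟩
  rw [SimpleGraph.edgeSet_deleteEdges]
  exact ⟨hM.1 he, hMF e he⟩

end BSaux

namespace BSaux

variable {n : ℕ}

/-- Successor in `Fin n` (wraps around, but we only use it below the top). -/
def fsucc {n : ℕ} (i : Fin n) : Fin n := ⟨((i : ℕ) + 1) % n, Nat.mod_lt _ i.pos⟩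

theorem fsucc_val {i : Fin n} (h : (i : ℕ) + 1 < n) : ((fsucc i : Fin n) : ℕ) = (i : ℕ) + 1 :=
  Nat.mod_eq_of_lt h

/-- The finset of generators. -/
noncomputable def genF (n : ℕ) : Finset (Equiv.Perm (Fin n)) :=
  ((Finset.univ.filter fun i : Fin n => (i : ℕ) ≠ 0).image
      fun i => Equiv.swap ⟨0, i.pos⟩ i) ∪
  ((Finset.univ.filter fun i : Fin n => 1 ≤ (i : ℕ) ∧ (i : ℕ) + 1 < n).image
      fun i => Equiv.swap i (fsucc i))

theorem mem_genF_iff {t : Equiv.Perm (Fin n)} : t ∈ genF n ↔ IsGen n t := by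
  constructor
  · intro ht
    rw [genF, Finset.mem_union] at ht
    rcases ht with ht | ht
    · rw [Finset.mem_image] at ht
      obtain ⟨i, hi, rfl⟩ := ht
      rw [Finset.mem_filter] at hi
      exact Or.inl ⟨i, hi.2, rfl⟩
    · rw [Finset.mem_image] at ht
      obtain ⟨i, hi, rfl⟩ := ht
      rw [Finset.mem_filter] at hi
      exact Or.inr ⟨i, fsucc i, (fsucc_val hi.2.2).symm, hi.2.1, rfl⟩
  · intro ht
    rw [genF, Finset.mem_union]
    rcases ht with ⟨i, hi, rfl⟩ | ⟨i, j, hij, hi, rfl⟩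
    · exact Or.inl (Finset.mem_image.2 ⟨i, Finset.mem_filter.2 ⟨Finset.mem_univ _, hi⟩, rfl⟩)
    · refine Or.inr (Finset.mem_image.2 ⟨i, Finset.mem_filter.2 ⟨Finset.mem_univ _, hi, by omega⟩, ?_⟩)
      congr 1
      exact Fin.ext (by rw [fsucc_val (by omega)]; omega)

theorem card_genF (hn : 3 ≤ n) : (genF n).card = 2 * n - 3 := by
  have h0 : (0 : ℕ) < n := by omega
  have hcard1 : ((Finset.univ.filter fun i : Fin n => (i : ℕ) ≠ 0).image
      fun i => Equiv.swap (⟨0, i.pos⟩ : Fin n) i).card = n - 1 := by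
    rw [Finset.card_image_of_injOn]
    · have : (Finset.univ.filter fun i : Fin n => (i : ℕ) ≠ 0) = Finset.univ.erase ⟨0, h0⟩ := by
        ext i
        simp [Fin.ext_iff]
      rw [this, Finset.card_erase_of_mem (Finset.mem_univ _), Finset.card_univ, Fintype.card_fin]
    · intro i _ j _ hij
      have : Equiv.swap (⟨0, h0⟩ : Fin n) i = Equiv.swap ⟨0, h0⟩ j := hij
      have := congrArg (fun f : Equiv.Perm (Fin n) => f ⟨0, h0⟩) this
      simpa [Equiv.swap_apply_left] using this
  have hcard2 : ((Finset.univ.filter fun i : Fin n => 1 ≤ (i : ℕ) ∧ (i : ℕ) + 1 < n).image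
      fun i => Equiv.swap i (fsucc i)).card = n - 2 := by
    rw [Finset.card_image_of_injOn]
    · rw [show (Finset.univ.filter fun i : Fin n => 1 ≤ (i : ℕ) ∧ (i : ℕ) + 1 < n).card =
          (Finset.Ico 1 (n - 1)).card from ?_]
      · rw [Nat.card_Ico]; omega
      · refine Finset.card_bij (fun i _ => (i : ℕ)) ?_ ?_ ?_
        · intro a ha
          rw [Finset.mem_filter] at ha
          obtain ⟨-, h1, h2⟩ := ha
          rw [Finset.mem_Ico]
          push_cast
          omega
        · intro a _ b _ h
          exact Fin.ext h
        · intro b hb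
          rw [Finset.mem_Ico] at hb
          refine ⟨⟨b, by omega⟩, Finset.mem_filter.2 ⟨Finset.mem_univ _, ?_⟩, rfl⟩
          constructor <;> simp <;> omega
    · intro i hi j hj hij
      rw [Finset.mem_coe, Finset.mem_filter] at hi hj
      have hij' : Equiv.swap i (fsucc i) = Equiv.swap j (fsucc j) := hij
      have hi1 : ((fsucc i : Fin n) : ℕ) = (i : ℕ) + 1 := fsucc_val hi.2.2
      have hj1 : ((fsucc j : Fin n) : ℕ) = (j : ℕ) + 1 := fsucc_val hj.2.2
      by_contra hne
      have h1 : Equiv.swap i (fsucc i) i = fsucc i := Equiv.swap_apply_left _ _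
      have h2 : Equiv.swap j (fsucc j) i = fsucc i := by rw [← hij']; exact h1
      have hor : i = j ∨ i = fsucc j := by
        by_contra hcon
        push_neg at hcon
        rw [Equiv.swap_apply_of_ne_of_ne hcon.1 hcon.2] at h2
        have := congrArg Fin.val h2
        omega
      rcases hor with rfl | h3
      · exact hne rfl
      · have h5 : Equiv.swap j (fsucc j) i = j := by
          rw [h3]; exact Equiv.swap_apply_right _ _
        have h6 : j = fsucc i := h5.symm.trans h2
        have := congrArg Fin.val h6
        rw [Fin.ext_iff] at h3
        omega
  have hdisj : Disjoint
      ((Finset.univ.filter fun i : Fin n => (i : ℕ) ≠ 0).image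
        fun i => Equiv.swap (⟨0, i.pos⟩ : Fin n) i)
      ((Finset.univ.filter fun i : Fin n => 1 ≤ (i : ℕ) ∧ (i : ℕ) + 1 < n).image
        fun i => Equiv.swap i (fsucc i)) := by
    rw [Finset.disjoint_left]
    intro t ht1 ht2
    rw [Finset.mem_image] at ht1 ht2
    obtain ⟨i, hi, hti⟩ := ht1
    obtain ⟨j, hj, htj⟩ := ht2
    rw [Finset.mem_filter] at hi hj
    have h1 : t ⟨0, h0⟩ = i := by rw [← hti]; exact Equiv.swap_apply_left _ _
    have hj1 : ((fsucc j : Fin n) : ℕ) = (j : ℕ) + 1 := fsucc_val hj.2.2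
    have h2 : t ⟨0, h0⟩ = ⟨0, h0⟩ := by
      rw [← htj]
      refine Equiv.swap_apply_of_ne_of_ne ?_ ?_ <;>
        · intro hc
          have := congrArg Fin.val hc
          simp at this
          omega
    rw [h1] at h2
    exact hi.2 (by rw [h2])
  rw [genF, Finset.card_union_of_disjoint hdisj, hcard1, hcard2]
  omega

end BSaux

namespace BSaux

variable {n : ℕ}

/-- Everything in the closure of two permutations fixing `c` fixes `c`. -/
theorem closure_fix {g h : Equiv.Perm (Fin n)} {c : Fin n} (hg : g c = c) (hh : h c = c)
    {y : Equiv.Perm (Fin n)} (hy : y ∈ Subgroup.closure {g, h}) : y c = c := by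
  induction hy using Subgroup.closure_induction with
  | mem x hx => rcases hx with rfl | rfl <;> assumption
  | one => rfl
  | mul x y _ _ hx hy => simp [Equiv.Perm.mul_apply, hy, hx]
  | inv x _ hx => conv_lhs => rw [← hx, Equiv.Perm.inv_def, Equiv.symm_apply_apply]

/-- The subgroup generated by two commuting involutions has at most 4 elements. -/
theorem closure_four {g h : Equiv.Perm (Fin n)} (hg : g * g = 1) (hh : h * h = 1)
    (hc : g * h = h * g) {y : Equiv.Perm (Fin n)} (hy : y ∈ Subgroup.closure {g, h}) :
    y = 1 ∨ y = g ∨ y = h ∨ y = g * h := by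
  induction hy using Subgroup.closure_induction with
  | mem x hx => rcases hx with rfl | rfl
                · exact Or.inr (Or.inl rfl)
                · exact Or.inr (Or.inr (Or.inl rfl))
  | one => exact Or.inl rfl
  | mul x y _ _ hx hy =>
      have e2 : h * g = g * h := hc.symm
      have e1 : g * (g * h) = h := by rw [← mul_assoc, hg, one_mul]
      have e3 : h * (g * h) = g := by rw [← mul_assoc, e2, mul_assoc, hh, mul_one]
      have e4 : g * h * g = h := by rw [mul_assoc, e2, ← mul_assoc, hg, one_mul]
      have e5 : g * h * h = g := by rw [mul_assoc, hh, mul_one]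
      have e6 : g * h * (g * h) = 1 := by rw [← mul_assoc, e4, hh]
      rcases hx with rfl | rfl | rfl | rfl <;> rcases hy with rfl | rfl | rfl | rfl <;>
        simp only [one_mul, mul_one, hg, hh, e1, e2, e3, e4, e5, e6] <;> tauto
  | inv x _ hx =>
      rcases hx with rfl | rfl | rfl | rfl
      · exact Or.inl inv_one
      · exact Or.inr (Or.inl (by rw [inv_eq_iff_mul_eq_one]; exact hg))
      · exact Or.inr (Or.inr (Or.inl (by rw [inv_eq_iff_mul_eq_one]; exact hh)))
      · refine Or.inr (Or.inr (Or.inr (by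
          rw [inv_eq_iff_mul_eq_one, mul_assoc, ← mul_assoc h g, ← hc, mul_assoc, hh, mul_one, hg])))

end BSaux

namespace BSaux

variable {n : ℕ}

theorem swap_commute {a b c d : Fin n} (hac : a ≠ c) (had : a ≠ d) (hbc : b ≠ c) (hbd : b ≠ d) :
    Equiv.swap a b * Equiv.swap c d = Equiv.swap c d * Equiv.swap a b := by
  have : (Equiv.swap a b).Disjoint (Equiv.swap c d) := by
    intro x
    by_cases hx : x = a ∨ x = b
    · right
      rcases hx with rfl | rfl
      · exact Equiv.swap_apply_of_ne_of_ne hac had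
      · exact Equiv.swap_apply_of_ne_of_ne hbc hbd
    · left
      push_neg at hx
      exact Equiv.swap_apply_of_ne_of_ne hx.1 hx.2
  exact this.commute

section Classify

variable {x : Equiv.Perm (Fin n)} {A B C : Fin n}

theorem img_mem (hout : ∀ c, c ≠ A → c ≠ B → c ≠ C → x c = c)
    {t : Fin n} (ht : t = A ∨ t = B ∨ t = C) : x t = A ∨ x t = B ∨ x t = C := by
  by_contra hc
  push_neg at hc
  have h1 : x (x t) = x t := hout _ hc.1 hc.2.1 hc.2.2
  have h2 : x t = t := x.injective h1
  rw [h2] at hc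
  rcases ht with rfl | rfl | rfl
  · exact hc.1 rfl
  · exact hc.2.1 rfl
  · exact hc.2.2 rfl

theorem classify_fixB (hout : ∀ c, c ≠ A → c ≠ B → c ≠ C → x c = c)
    (hAB : A ≠ B) (hAC : A ≠ C) (hBC : B ≠ C) (hB : x B = B) :
    x = 1 ∨ x = Equiv.swap A C := by
  have hA : x A = A ∨ x A = C := by
    rcases img_mem hout (Or.inl rfl) with h | h | h
    · exact Or.inl h
    · exact absurd (x.injective (h.trans hB.symm)) hAB
    · exact Or.inr h
  rcases hA with hA | hA
  · left
    ext t
    by_cases h1 : t = A; · rw [h1, hA]; rfl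
    by_cases h2 : t = B; · rw [h2, hB]; rfl
    by_cases h3 : t = C
    · subst h3
      rcases img_mem hout (Or.inr (Or.inr rfl)) with h | h | h
      · exact absurd (x.injective (h.trans hA.symm)) (Ne.symm hAC)
      · exact absurd (x.injective (h.trans hB.symm)) (Ne.symm hBC)
      · rw [h]; rfl
    · rw [hout t h1 h2 h3]; rfl
  · right
    have hC : x C = A := by
      rcases img_mem hout (Or.inr (Or.inr rfl)) with h | h | h
      · exact h
      · exact absurd (x.injective (h.trans hB.symm)) hBC.symm
      · exact absurd (x.injective (h.trans hA.symm)) (Ne.symm hAC)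
    ext t
    by_cases h1 : t = A; · rw [h1, hA, Equiv.swap_apply_left]
    by_cases h2 : t = B; · rw [h2, hB, Equiv.swap_apply_of_ne_of_ne (Ne.symm hAB) hBC]
    by_cases h3 : t = C; · rw [h3, hC, Equiv.swap_apply_right]
    · rw [hout t h1 h2 h3, Equiv.swap_apply_of_ne_of_ne h1 h3]

theorem classify_BtoA (hout : ∀ c, c ≠ A → c ≠ B → c ≠ C → x c = c)
    (hAB : A ≠ B) (hAC : A ≠ C) (hBC : B ≠ C) (hB : x B = A) :
    x = Equiv.swap A B ∨ x = Equiv.swap A B * Equiv.swap A C := by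
  have hA : x A = B ∨ x A = C := by
    rcases img_mem hout (Or.inl rfl) with h | h | h
    · exact absurd (x.injective (h.trans hB.symm)) hAB
    · exact Or.inl h
    · exact Or.inr h
  rcases hA with hA | hA
  · left
    have hC : x C = C := by
      rcases img_mem hout (Or.inr (Or.inr rfl)) with h | h | h
      · exact absurd (x.injective (h.trans hB.symm)) (Ne.symm hBC)
      · exact absurd (x.injective (h.trans hA.symm)) (Ne.symm hAC)
      · exact h
    ext t
    by_cases h1 : t = A; · rw [h1, hA, Equiv.swap_apply_left]
    by_cases h2 : t = B; · rw [h2, hB, Equiv.swap_apply_right]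
    by_cases h3 : t = C; · rw [h3, hC, Equiv.swap_apply_of_ne_of_ne (Ne.symm hAC) (Ne.symm hBC)]
    · rw [hout t h1 h2 h3, Equiv.swap_apply_of_ne_of_ne h1 h2]
  · right
    have hC : x C = B := by
      rcases img_mem hout (Or.inr (Or.inr rfl)) with h | h | h
      · exact absurd (x.injective (h.trans hB.symm)) hBC.symm
      · exact h
      · exact absurd (x.injective (h.trans hA.symm)) (Ne.symm hAC)
    ext t
    simp only [Equiv.Perm.mul_apply]
    by_cases h1 : t = A
    · rw [h1, hA, Equiv.swap_apply_left, Equiv.swap_apply_of_ne_of_ne (Ne.symm hAC) (Ne.symm hBC)]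
    by_cases h2 : t = B
    · rw [h2, hB, Equiv.swap_apply_of_ne_of_ne (Ne.symm hAB) hBC, Equiv.swap_apply_right]
    by_cases h3 : t = C
    · rw [h3, hC, Equiv.swap_apply_right, Equiv.swap_apply_left]
    · rw [hout t h1 h2 h3, Equiv.swap_apply_of_ne_of_ne h1 h3,
        Equiv.swap_apply_of_ne_of_ne h1 h2]

end Classify

end BSaux

namespace BSaux

theorem eval_of_inv_mul_fix {n : ℕ} {p q : Equiv.Perm (Fin n)} {c : Fin n}
    (h : (p⁻¹ * q) c = c) : q c = p c := by
  have := congrArg p h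
  simpa using this

/-- The combinatorial core for `n ≥ 4`: blocked coset conditions force a common vertex. -/
theorem stageC {n : ℕ} (hn4 : 4 ≤ n) (z0 z1 : Fin n) (hv0 : (z0 : ℕ) = 0)
    (hv1 : (z1 : ℕ) = 1) (x : Equiv.Perm (Fin n) → Equiv.Perm (Fin n))
    (hx1 : ∀ t t', IsGen n t → IsGen n t' → t ≠ t' →
      (x t)⁻¹ * x t' ∈ Subgroup.closure {t, t'})
    (hxa : x (Equiv.swap z0 z1) = 1) :
    ∃ ε : Equiv.Perm (Fin n), ∀ t, IsGen n t → x t = ε ∨ x t = ε * t := by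
  obtain ⟨z2, hv2⟩ : ∃ z : Fin n, (z : ℕ) = 2 := ⟨⟨2, by omega⟩, rfl⟩
  obtain ⟨z3, hv3⟩ : ∃ z : Fin n, (z : ℕ) = 3 := ⟨⟨3, by omega⟩, rfl⟩
  have hne : ∀ u w : Fin n, (u : ℕ) ≠ (w : ℕ) → u ≠ w := fun u w h hc => h (by rw [hc])
  have h01 : z0 ≠ z1 := hne _ _ (by omega)
  have h02 : z0 ≠ z2 := hne _ _ (by omega)
  have h03 : z0 ≠ z3 := hne _ _ (by omega)
  have h12 : z1 ≠ z2 := hne _ _ (by omega)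
  have h13 : z1 ≠ z3 := hne _ _ (by omega)
  have h23 : z2 ≠ z3 := hne _ _ (by omega)
  have fix : ∀ u w c : Fin n, c ≠ u → c ≠ w → Equiv.swap u w c = c :=
    fun u w c hcu hcw => Equiv.swap_apply_of_ne_of_ne hcu hcw
  -- generators
  have hzz : ∀ i : Fin n, (⟨0, i.pos⟩ : Fin n) = z0 := fun i => Fin.ext (by simp [hv0])
  have hgstar : ∀ i : Fin n, (i : ℕ) ≠ 0 → IsGen n (Equiv.swap z0 i) := by
    intro i hi
    exact Or.inl ⟨i, hi, by rw [hzz i]⟩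
  have hga : IsGen n (Equiv.swap z0 z1) := hgstar z1 (by omega)
  have hgs2 : IsGen n (Equiv.swap z0 z2) := hgstar z2 (by omega)
  have hgs3 : IsGen n (Equiv.swap z0 z3) := hgstar z3 (by omega)
  have hgp1 : IsGen n (Equiv.swap z1 z2) := Or.inr ⟨z1, z2, by omega, by omega, rfl⟩
  have hgp2 : IsGen n (Equiv.swap z2 z3) := Or.inr ⟨z2, z3, by omega, by omega, rfl⟩
  -- inequalities between generators
  have star_ne : ∀ i j : Fin n, (i : ℕ) ≠ 0 → i ≠ j → Equiv.swap z0 i ≠ Equiv.swap z0 j := by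
    intro i j hi hij hc
    have := congrArg (fun f : Equiv.Perm (Fin n) => f z0) hc
    simp only [Equiv.swap_apply_left] at this
    exact hij this
  have star_path_ne : ∀ i u w : Fin n, (i : ℕ) ≠ 0 → (u : ℕ) ≠ 0 → (w : ℕ) ≠ 0 →
      Equiv.swap z0 i ≠ Equiv.swap u w := by
    intro i u w hi hu hw hc
    have := congrArg (fun f : Equiv.Perm (Fin n) => f z0) hc
    simp only [Equiv.swap_apply_left] at this
    rw [fix u w z0 (hne _ _ (by omega)) (hne _ _ (by omega))] at this
    exact (hne i z0 (by omega)) this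
  -- blocked conditions relative to `a = swap z0 z1`
  have blockx : ∀ t, IsGen n t → t ≠ Equiv.swap z0 z1 →
      x t ∈ Subgroup.closure {Equiv.swap z0 z1, t} := by
    intro t ht hta
    have := hx1 (Equiv.swap z0 z1) t hga ht (Ne.symm hta)
    rwa [hxa, inv_one, one_mul] at this
  -- agreement of values at z1
  have agree : ∀ t t', IsGen n t → IsGen n t' → t ≠ t' → t z1 = z1 → t' z1 = z1 →
      (x t') z1 = (x t) z1 :=
    fun t t' ht ht' htt' h1 h1' =>
      eval_of_inv_mul_fix (closure_fix h1 h1' (hx1 t t' ht ht' htt'))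
  obtain ⟨vv, hvvdef⟩ : ∃ v, v = x (Equiv.swap z0 z2) z1 := ⟨_, rfl⟩
  -- all "z1-fixing" generators have value vv at z1
  have hstar_val : ∀ i : Fin n, 2 ≤ (i : ℕ) → (x (Equiv.swap z0 i)) z1 = vv := by
    intro i hi
    by_cases hii : i = z2
    · rw [hii, hvvdef]
    · rw [hvvdef]
      exact agree _ _ (hgstar z2 (by omega)) (hgstar i (by omega))
        (star_ne z2 i (by omega) (Ne.symm hii)) (fix _ _ _ (Ne.symm h01) h12)
        (fix _ _ _ (Ne.symm h01) (hne _ _ (by omega)))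
  have hpath_val : ∀ i j : Fin n, (i : ℕ) + 1 = (j : ℕ) → 2 ≤ (i : ℕ) →
      (x (Equiv.swap i j)) z1 = vv := by
    intro i j hij hi
    rw [hvvdef]
    exact agree _ _ hgs2 (Or.inr ⟨i, j, hij, by omega, rfl⟩)
      (star_path_ne z2 i j (by omega) (by omega) (by omega))
      (fix _ _ _ (Ne.symm h01) h12)
      (fix _ _ _ (hne _ _ (by omega)) (hne _ _ (by omega)))
  -- vv ∈ {z0, z1} via p2 = swap z2 z3
  have hv01 : vv = z0 ∨ vv = z1 := by
    have hmem := blockx (Equiv.swap z2 z3) hgp2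
      (Ne.symm (star_path_ne z1 z2 z3 (by omega) (by omega) (by omega)))
    have hcand := closure_four (Equiv.swap_mul_self z0 z1) (Equiv.swap_mul_self z2 z3)
      (swap_commute h02 h03 h12 h13) hmem
    have hval : (x (Equiv.swap z2 z3)) z1 = vv := hpath_val z2 z3 (by omega) (by omega)
    rcases hcand with hq | hq | hq | hq <;> rw [hq] at hval
    · right; rw [← hval]; rfl
    · left; rw [← hval, Equiv.swap_apply_right]
    · right; rw [← hval]; exact fix _ _ _ h12 h13
    · left
      rw [← hval, Equiv.Perm.mul_apply, fix _ _ _ h12 h13, Equiv.swap_apply_right]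
  -- choose ε
  obtain ⟨ε, hε⟩ : ∃ ε : Equiv.Perm (Fin n),
      (ε = 1 ∧ vv = z1) ∨ (ε = Equiv.swap z0 z1 ∧ vv = z0) := by
    rcases hv01 with hvv | hvv
    · exact ⟨Equiv.swap z0 z1, Or.inr ⟨rfl, hvv⟩⟩
    · exact ⟨1, Or.inl ⟨rfl, hvv⟩⟩
  have hεz0 : ε z0 ≠ z3 := by
    rcases hε with ⟨rfl, -⟩ | ⟨rfl, -⟩
    · exact h03
    · rw [Equiv.swap_apply_left]; exact h13
  -- the star generators
  have star_main : ∀ i : Fin n, 2 ≤ (i : ℕ) →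
      x (Equiv.swap z0 i) = ε ∨ x (Equiv.swap z0 i) = ε * Equiv.swap z0 i := by
    intro i hi2
    have hout : ∀ c : Fin n, c ≠ z0 → c ≠ z1 → c ≠ i → (x (Equiv.swap z0 i)) c = c := by
      intro c hc0 hc1 hci
      exact closure_fix (fix _ _ _ hc0 hc1) (fix _ _ _ hc0 hci)
        (blockx _ (hgstar i (by omega)) (star_ne i z1 (by omega) (hne _ _ (by omega))))
    have hval : (x (Equiv.swap z0 i)) z1 = vv := hstar_val i hi2
    rcases hε with ⟨rfl, hvv⟩ | ⟨rfl, hvv⟩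
    · rcases classify_fixB hout h01 (hne _ _ (by omega)) (hne _ _ (by omega))
        (by rw [hval, hvv]) with h | h
      · exact Or.inl h
      · right; rw [one_mul]; exact h
    · rcases classify_BtoA hout h01 (hne _ _ (by omega)) (hne _ _ (by omega))
        (by rw [hval, hvv]) with h | h
      · exact Or.inl h
      · exact Or.inr h
  refine ⟨ε, ?_⟩
  intro t ht
  rcases ht with ⟨i, hi0, rfl⟩ | ⟨i, j, hij, hi1, rfl⟩
  · -- star generator
    rw [hzz i]
    by_cases hi1 : i = z1
    · subst hi1
      rw [hxa]
      rcases hε with ⟨rfl, -⟩ | ⟨rfl, -⟩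
      · exact Or.inl rfl
      · right; rw [Equiv.swap_mul_self]
    · exact star_main i (by
        have : (i : ℕ) ≠ 1 := fun hc => hi1 (by rw [← hv1] at hc; exact Fin.ext hc)
        omega)
  · -- path generator
    by_cases hpi : 2 ≤ (i : ℕ)
    · have hmem := blockx (Equiv.swap i j) (Or.inr ⟨i, j, hij, hi1, rfl⟩)
        (Ne.symm (star_path_ne z1 i j (by omega) (by omega) (by omega)))
      have hcand := closure_four (Equiv.swap_mul_self z0 z1) (Equiv.swap_mul_self i j)
        (swap_commute (hne _ _ (by omega)) (hne _ _ (by omega))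
          (hne _ _ (by omega)) (hne _ _ (by omega))) hmem
      have hval : (x (Equiv.swap i j)) z1 = vv := hpath_val i j hij hpi
      rcases hε with ⟨rfl, hvv⟩ | ⟨rfl, hvv⟩
      · rcases hcand with hq | hq | hq | hq <;> rw [hq] at hval ⊢
        · exact Or.inl rfl
        · exfalso
          rw [Equiv.swap_apply_right, hvv] at hval
          exact h01 hval
        · right; rw [one_mul]
        · exfalso
          rw [Equiv.Perm.mul_apply, fix i j z1 (hne z1 i (by omega)) (hne z1 j (by omega)),
            Equiv.swap_apply_right, hvv] at hval
          exact h01 hval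
      · rcases hcand with hq | hq | hq | hq <;> rw [hq] at hval ⊢
        · exfalso
          rw [hvv] at hval
          exact h01 hval.symm
        · exact Or.inl rfl
        · exfalso
          rw [fix i j z1 (hne z1 i (by omega)) (hne z1 j (by omega)), hvv] at hval
          exact h01 hval.symm
        · exact Or.inr rfl
    · -- i has value 1, j has value 2 : the generator p1
      have hi1' : (i : ℕ) = 1 := by omega
      have hj2' : (j : ℕ) = 2 := by omega
      have hq := hx1 (Equiv.swap z0 z3) (Equiv.swap i j) hgs3 (Or.inr ⟨i, j, hij, hi1, rfl⟩)
        (star_path_ne z3 i j (by omega) (by omega) (by omega))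
      have hqcand := closure_four (Equiv.swap_mul_self z0 z3) (Equiv.swap_mul_self i j)
        (swap_commute (hne z0 i (by omega)) (hne z0 j (by omega))
          (hne z3 i (by omega)) (hne z3 j (by omega))) hq
      have hxp1 : x (Equiv.swap i j) =
          x (Equiv.swap z0 z3) * ((x (Equiv.swap z0 z3))⁻¹ * x (Equiv.swap i j)) :=
        (mul_inv_cancel_left _ _).symm
      have hfix3 : (x (Equiv.swap i j)) z3 = z3 :=
        closure_fix (fix z0 z1 z3 (Ne.symm h03) (Ne.symm h13))
          (fix i j z3 (hne z3 i (by omega)) (hne z3 j (by omega)))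
          (blockx _ (Or.inr ⟨i, j, hij, hi1, rfl⟩)
            (Ne.symm (star_path_ne z1 i j (by omega) (by omega) (by omega))))
      rcases star_main z3 (by omega) with h3 | h3 <;>
        rcases hqcand with hqq | hqq | hqq | hqq <;> rw [hqq, h3] at hxp1
      · rw [mul_one] at hxp1; exact Or.inl hxp1
      · exfalso
        rw [hxp1, Equiv.Perm.mul_apply, Equiv.swap_apply_right] at hfix3
        exact hεz0 hfix3
      · exact Or.inr hxp1
      · exfalso
        rw [hxp1, Equiv.Perm.mul_apply, Equiv.Perm.mul_apply,
          fix i j z3 (hne z3 i (by omega)) (hne z3 j (by omega)),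
          Equiv.swap_apply_right] at hfix3
        exact hεz0 hfix3
      · exfalso
        rw [mul_one] at hxp1
        rw [hxp1, Equiv.Perm.mul_apply, Equiv.swap_apply_right] at hfix3
        exact hεz0 hfix3
      · left
        rw [hxp1, mul_assoc, Equiv.swap_mul_self, mul_one]
      · exfalso
        rw [hxp1, Equiv.Perm.mul_apply, fix i j z3 (hne z3 i (by omega)) (hne z3 j (by omega)),
          Equiv.Perm.mul_apply, Equiv.swap_apply_right] at hfix3
        exact hεz0 hfix3
      · right
        rw [hxp1, mul_assoc, ← mul_assoc (Equiv.swap z0 z3), Equiv.swap_mul_self, one_mul]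

end BSaux


namespace BSaux

/-- The three even permutations of `Fin 3`. -/
def E3 : Fin 3 → Equiv.Perm (Fin 3) :=
  ![1, Equiv.swap 0 1 * Equiv.swap 1 2,
    Equiv.swap 0 1 * Equiv.swap 1 2 * (Equiv.swap 0 1 * Equiv.swap 1 2)]

/-- The three odd permutations of `Fin 3`. -/
def O3 : Fin 3 → Equiv.Perm (Fin 3) :=
  ![Equiv.swap 0 1, Equiv.swap 0 2, Equiv.swap 1 2]

theorem L1 : ∀ x : Equiv.Perm (Fin 3), (∃ i, x = E3 i) ∨ (∃ i, x = O3 i) := by decide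

theorem L2 : ∀ i j : Fin 3, E3 i ≠ O3 j := by decide

theorem L3 : ∀ i j : Fin 3, E3 i = E3 j → i = j := by decide

theorem L4 : ∀ i j : Fin 3, O3 i = O3 j → i = j := by decide

theorem L10 : ∀ i k : Fin 3, ∃ j, E3 i * O3 k = O3 j := by decide

theorem L11 : ∀ j k : Fin 3, ∃ i, O3 j * O3 k = E3 i := by decide

theorem L6 : ∀ i j : Fin 3, ∃ k, O3 j = E3 i * O3 k := by decide

theorem L5 : ∀ t, IsGen 3 t → ∃ k : Fin 3, t = O3 k := by
  intro t ht
  rcases ht with ⟨i, hi, rfl⟩ | ⟨i, j, hij, hi, rfl⟩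
  · rcases i with ⟨iv, hiv⟩
    interval_cases iv
    · exact absurd rfl hi
    · exact ⟨0, show Equiv.swap 0 1 = O3 0 from by decide⟩
    · exact ⟨1, show Equiv.swap 0 2 = O3 1 from by decide⟩
  · rcases i with ⟨iv, hiv⟩
    rcases j with ⟨jv, hjv⟩
    simp only at hij hi
    have h1 : iv = 1 := by omega
    have h2 : jv = 2 := by omega
    subst h1 h2
    exact ⟨2, show Equiv.swap 1 2 = O3 2 from by decide⟩

theorem L7 : ∀ (v : Equiv.Perm (Fin 3)) (k : Fin 3), bssRel 3 (v * O3 k) v := by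
  intro v k
  fin_cases k
  · refine Or.inl ⟨1, by decide, ?_⟩
    congr 1
  · refine Or.inl ⟨2, by decide, ?_⟩
    congr 1
  · refine Or.inr ⟨1, 2, by decide, by decide, ?_⟩
    congr 1

theorem L8 : ∀ i j : Fin 3, (BS 3).Adj (E3 i) (O3 j) := by
  intro i j
  obtain ⟨k, hk⟩ := L6 i j
  rw [BS, SimpleGraph.fromRel_adj]
  refine ⟨L2 i j, Or.inr ?_⟩
  rw [hk]
  exact L7 (E3 i) k

theorem hOgen : ∀ k : Fin 3, IsGen 3 (O3 k) := by
  intro k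
  fin_cases k
  · exact Or.inl ⟨1, by decide, by decide⟩
  · exact Or.inl ⟨2, by decide, by decide⟩
  · exact Or.inr ⟨1, 2, by decide, by decide, by decide⟩

theorem dec7 : ∀ r : Fin 3 → Fin 3 × Fin 3,
    (∀ k, (r k).1 = (r 0).1) ∨ (∀ k, (r k).2 = (r 0).2) ∨
    ∃ σ : Equiv.Perm (Fin 3), ∀ k, σ (r k).1 ≠ (r k).2 := by decide

end BSaux

/-- For every `n ≥ 3`, every optimal matching preclusion set of `BS_n` is trivial:
if `F ⊆ E(BS_n)` has `|F| = mp(BS_n) = 2n - 3` and `BS_n - F` has no perfect matching,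
then all edges of `F` are incident with one common vertex `u`. -/
theorem mp_bubbleSortStar_optimal_trivial (n : ℕ) (hn : 3 ≤ n)
    (F : Set (Sym2 (Equiv.Perm (Fin n)))) (hF : F ⊆ (BS n).edgeSet)
    (hcard : F.ncard = 2 * n - 3)
    (hnoPM : ¬ ∃ M, IsPM ((BS n).deleteEdges F) M) :
    ∃ u : Equiv.Perm (Fin n), ∀ e ∈ F, u ∈ e := by
  classical
  -- every generator's colour class is hit by F
  have key2 : ∀ t : Equiv.Perm (Fin n), BSaux.IsGen n t → ∃ v, s(v, v * t) ∈ F := by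
    intro t ht
    by_contra hmiss
    push_neg at hmiss
    apply hnoPM
    refine ⟨BSaux.pairM t t Set.univ, BSaux.isPM_deleteEdges (BSaux.isPM_pairM ht ht
      (fun y _ => Set.mem_univ _) (fun y _ => Set.mem_univ _)
      (fun y _ => Set.mem_univ _) (fun y _ => Set.mem_univ _)) ?_⟩
    rintro e ⟨v, ⟨-, rfl⟩ | ⟨hv, rfl⟩⟩
    · exact hmiss v
    · exact absurd (Set.mem_univ v) hv
  have key2' : ∀ t : Equiv.Perm (Fin n), ∃ v, BSaux.IsGen n t → s(v, v * t) ∈ F := by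
    intro t
    by_cases ht : BSaux.IsGen n t
    · obtain ⟨v, hv⟩ := key2 t ht
      exact ⟨v, fun _ => hv⟩
    · exact ⟨1, fun h => absurd h ht⟩
  choose uu huu using key2'
  have hFfin : F.Finite := Set.toFinite F
  have hFc : hFfin.toFinset.card = 2 * n - 3 := by
    rw [← Set.ncard_eq_toFinset_card F hFfin]
    exact hcard
  -- every edge of F is one of the chosen representatives
  have hsurj : ∀ e ∈ F, ∃ t, BSaux.IsGen n t ∧ e = s(uu t, uu t * t) := by
    have hmaps : ∀ t ∈ BSaux.genF n, s(uu t, uu t * t) ∈ hFfin.toFinset := by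
      intro t ht
      rw [Set.Finite.mem_toFinset]
      exact huu t (BSaux.mem_genF_iff.1 ht)
    have hinj : ∀ t₁ t₂ : Equiv.Perm (Fin n), t₁ ∈ BSaux.genF n → t₂ ∈ BSaux.genF n →
        s(uu t₁, uu t₁ * t₁) = s(uu t₂, uu t₂ * t₂) → t₁ = t₂ := by
      intro t₁ t₂ h1 h2 he
      exact (BSaux.color_unique (BSaux.mem_genF_iff.1 h1) (BSaux.mem_genF_iff.1 h2) he).1
    have hle : hFfin.toFinset.card ≤ (BSaux.genF n).card := by
      rw [hFc, BSaux.card_genF hn]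
    intro e he
    obtain ⟨t, ht, hte⟩ := Finset.surj_on_of_inj_on_of_card_le (fun t _ => s(uu t, uu t * t))
      hmaps hinj hle e (hFfin.mem_toFinset.2 he)
    exact ⟨t, BSaux.mem_genF_iff.1 ht, hte⟩
  -- blocked coset condition for each pair of generators
  have block : ∀ g h : Equiv.Perm (Fin n), BSaux.IsGen n g → BSaux.IsGen n h → g ≠ h →
      (uu g)⁻¹ * uu h ∈ Subgroup.closure {g, h} := by
    intro g h hg hh hgh
    by_contra hq
    apply hnoPM
    have hCg : ∀ y : Equiv.Perm (Fin n),
        y ∈ {y | (uu g)⁻¹ * y ∈ Subgroup.closure {g, h}} →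
        y * g ∈ {y | (uu g)⁻¹ * y ∈ Subgroup.closure {g, h}} := by
      intro y hy
      have h2 : (uu g)⁻¹ * (y * g) = ((uu g)⁻¹ * y) * g := by rw [mul_assoc]
      simp only [Set.mem_setOf_eq] at hy ⊢
      rw [h2]
      exact mul_mem hy (Subgroup.subset_closure (by simp))
    have hCh : ∀ y : Equiv.Perm (Fin n),
        y ∈ {y | (uu g)⁻¹ * y ∈ Subgroup.closure {g, h}} →
        y * h ∈ {y | (uu g)⁻¹ * y ∈ Subgroup.closure {g, h}} := by
      intro y hy
      have h2 : (uu g)⁻¹ * (y * h) = ((uu g)⁻¹ * y) * h := by rw [mul_assoc]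
      simp only [Set.mem_setOf_eq] at hy ⊢
      rw [h2]
      exact mul_mem hy (Subgroup.subset_closure (by simp))
    have hCg' : ∀ y : Equiv.Perm (Fin n),
        y * g ∈ {y | (uu g)⁻¹ * y ∈ Subgroup.closure {g, h}} →
        y ∈ {y | (uu g)⁻¹ * y ∈ Subgroup.closure {g, h}} := by
      intro y hy
      have := hCg _ hy
      rwa [mul_assoc, BSaux.gen_mul_self hg, mul_one] at this
    have hCh' : ∀ y : Equiv.Perm (Fin n),
        y * h ∈ {y | (uu g)⁻¹ * y ∈ Subgroup.closure {g, h}} →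
        y ∈ {y | (uu g)⁻¹ * y ∈ Subgroup.closure {g, h}} := by
      intro y hy
      have := hCh _ hy
      rwa [mul_assoc, BSaux.gen_mul_self hh, mul_one] at this
    refine ⟨_, BSaux.isPM_deleteEdges (BSaux.isPM_pairM hg hh hCg hCh hCg' hCh') ?_⟩
    intro e he heF
    obtain ⟨t, ht, hte⟩ := hsurj e heF
    have huug : uu g ∈ {y | (uu g)⁻¹ * y ∈ Subgroup.closure {g, h}} := by
      simp only [Set.mem_setOf_eq, inv_mul_cancel]
      exact one_mem _
    rcases he with ⟨v, ⟨hv, rfl⟩ | ⟨hv, rfl⟩⟩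
    · -- h-coloured edge of the matching
      obtain ⟨hth, hw⟩ := BSaux.color_unique ht hh hte.symm
      subst hth
      apply hq
      rcases hw with rfl | rfl
      · exact hv
      · exact hCh' _ hv
    · -- g-coloured edge of the matching
      obtain ⟨hth, hw⟩ := BSaux.color_unique ht hg hte.symm
      subst hth
      rcases hw with rfl | rfl
      · exact hv huug
      · exact hv (hCg _ huug)
  rcases Nat.lt_or_ge n 4 with hn4 | hn4
  · -- n = 3
    have hn3 : n = 3 := by omega
    subst hn3
    by_contra hcon
    push_neg at hcon
    have cell : ∀ k : Fin 3, ∃ i j : Fin 3,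
        s(uu (BSaux.O3 k), uu (BSaux.O3 k) * BSaux.O3 k) = s(BSaux.E3 i, BSaux.O3 j) := by
      intro k
      rcases BSaux.L1 (uu (BSaux.O3 k)) with ⟨i, hi⟩ | ⟨j, hj⟩
      · obtain ⟨j, hj⟩ := BSaux.L10 i k
        exact ⟨i, j, by rw [hi, hj]⟩
      · obtain ⟨i, hi⟩ := BSaux.L11 j k
        exact ⟨i, j, by rw [hj, hi]; exact Sym2.eq_swap⟩
    choose I J hIJ using cell
    rcases BSaux.dec7 (fun k => (I k, J k)) with hrow | hcol | ⟨σ, hσ⟩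
    · obtain ⟨e, heF, hue⟩ := hcon (BSaux.E3 (I 0))
      obtain ⟨t, ht, rfl⟩ := hsurj e heF
      obtain ⟨k, rfl⟩ := BSaux.L5 t ht
      apply hue
      rw [hIJ k, show I k = I 0 from hrow k]
      exact Sym2.mem_mk_left _ _
    · obtain ⟨e, heF, hue⟩ := hcon (BSaux.O3 (J 0))
      obtain ⟨t, ht, rfl⟩ := hsurj e heF
      obtain ⟨k, rfl⟩ := BSaux.L5 t ht
      apply hue
      rw [hIJ k, show J k = J 0 from hcol k]
      exact Sym2.mem_mk_right _ _
    · apply hnoPM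
      refine ⟨{e | ∃ i : Fin 3, e = s(BSaux.E3 i, BSaux.O3 (σ i))},
        BSaux.isPM_deleteEdges ⟨?_, ?_⟩ ?_⟩
      · rintro e ⟨i, rfl⟩
        exact BSaux.L8 i (σ i)
      · intro v
        rcases BSaux.L1 v with ⟨i, rfl⟩ | ⟨j, rfl⟩
        · refine ⟨s(BSaux.E3 i, BSaux.O3 (σ i)), ⟨⟨i, rfl⟩, Sym2.mem_mk_left _ _⟩, ?_⟩
          rintro e ⟨⟨i', rfl⟩, hv⟩
          rcases Sym2.mem_iff.1 hv with h | h
          · rw [BSaux.L3 _ _ h]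
          · exact absurd h (BSaux.L2 i (σ i'))
        · refine ⟨s(BSaux.E3 (σ⁻¹ j), BSaux.O3 (σ (σ⁻¹ j))), ⟨⟨σ⁻¹ j, rfl⟩, ?_⟩, ?_⟩
          · rw [Equiv.Perm.inv_def, Equiv.apply_symm_apply]
            exact Sym2.mem_mk_right _ _
          · rintro e ⟨⟨i', rfl⟩, hv⟩
            rcases Sym2.mem_iff.1 hv with h | h
            · exact absurd h.symm (BSaux.L2 i' j)
            · have h2 : σ i' = j := (BSaux.L4 _ _ h).symm
              have h3 : i' = σ⁻¹ j := by rw [← h2]; simp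
              rw [h3]
      · rintro e ⟨i, rfl⟩ heF
        obtain ⟨t, ht, hte⟩ := hsurj _ heF
        obtain ⟨k, rfl⟩ := BSaux.L5 t ht
        have h2 : s(BSaux.E3 i, BSaux.O3 (σ i)) = s(BSaux.E3 (I k), BSaux.O3 (J k)) :=
          hte.trans (hIJ k)
        rw [Sym2.eq_iff] at h2
        rcases h2 with ⟨h3, h4⟩ | ⟨h3, h4⟩
        · exact hσ k (by rw [← (BSaux.L3 _ _ h3 : i = I k)]; exact BSaux.L4 _ _ h4)
        · exact absurd h3 (BSaux.L2 i (J k))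
  · -- n ≥ 4
    obtain ⟨z0, hv0⟩ : ∃ z : Fin n, (z : ℕ) = 0 := ⟨⟨0, by omega⟩, rfl⟩
    obtain ⟨z1, hv1⟩ : ∃ z : Fin n, (z : ℕ) = 1 := ⟨⟨1, by omega⟩, rfl⟩
    have hga : BSaux.IsGen n (Equiv.swap z0 z1) := by
      refine Or.inl ⟨z1, by omega, ?_⟩
      congr 1
      exact Fin.ext (by simp [hv0])
    obtain ⟨ε, hε⟩ := BSaux.stageC hn4 z0 z1 hv0 hv1
      (fun t => (uu (Equiv.swap z0 z1))⁻¹ * uu t)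
      (by
        intro t t' ht ht' htt'
        rw [show ((uu (Equiv.swap z0 z1))⁻¹ * uu t)⁻¹ *
            ((uu (Equiv.swap z0 z1))⁻¹ * uu t') = (uu t)⁻¹ * uu t' by group]
        exact block t t' ht ht' htt')
      (by simp only [inv_mul_cancel])
    refine ⟨uu (Equiv.swap z0 z1) * ε, ?_⟩
    intro e he
    obtain ⟨t, ht, rfl⟩ := hsurj e he
    rcases hε t ht with hx | hx
    · have h2 : uu t = uu (Equiv.swap z0 z1) * ε := by
        rw [← hx]
        exact (mul_inv_cancel_left _ _).symm
      rw [← h2]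
      exact Sym2.mem_mk_left _ _
    · have h2 : uu t * t = uu (Equiv.swap z0 z1) * ε := by
        have h3 : uu t = uu (Equiv.swap z0 z1) * (ε * t) := by
          rw [← hx]
          exact (mul_inv_cancel_left _ _).symm
        rw [h3, mul_assoc, mul_assoc, BSaux.gen_mul_self ht, mul_one]
      rw [← h2]
      exact Sym2.mem_mk_right _ _
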